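/- Let N ≥ 1, let ω1, ω2 be nonzero complex numbers with Im(ω1/ω2) > 0 and Re(ω1/ω2) > 0, and let g, g_0,…,g_4 ∈ ℂ with ℬ = (2N−2)g + Σ_{n=0}^4 g_n. Define 𝒩(g_0,…,g_4) = (−2)^N N! (q̃;q̃)_∞^N/(q;q)_∞^N · ∏_{j=1}^N [S(g;ω)/S(jg;ω)] · [∏_{n=0}^4 S((1−j)g + ℬ − g_n;ω)] / [∏_{0 ≤ n < m ≤ 4} S((j−1)g + g_n + g_m;ω)], and set t = e^{2πi g/ω2}, t_n = e^{2πi g_n/ω2}, B = e^{2πi ℬ/ω2}, q = e^{2πi ω1/ω2}. Then, whenever all double sine values involved are defined and nonzero, 𝒩(g_0, g_1, g_2, g_3, g_4) / 𝒩(g_0 + ω1/2, g_1 + ω1/2, g_2 + ω1/2, g_3 − ω1/2, g_4 − ω1/2) = ρ̃ / ρ, where ρ = ∏_{j=1}^N (1 − t^{j−1} t_0 t_1)(1 − t^{j−1} t_0 t_2)(1 − t^{j−1} t_1 t_2) and ρ̃ = ∏_{j=1}^N (1 − t^{j−1} t_3 t_4 q^{−1})(1 − t^{1−j} B t_3^{−1})(1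 − t^{1−j} B t_4^{−1}). -/

import Mathlib

open Complex

/-- The infinite `q`-Pochhammer symbol `(a;q)_∞ = ∏_{n≥0} (1 - a qⁿ)`. -/
noncomputable def qPoch (a p : ℂ) : ℂ := ∏' n : ℕ, (1 - a * p ^ n)

/-- The double sine function
`S(u;ω1,ω2) = (e^{2πi u/ω2}; q)_∞ / (e^{2πi u/ω1} q̃; q̃)_∞`. -/
noncomputable def dsine (ω1 ω2 u : ℂ) : ℂ :=
  qPoch (exp (2*(Real.pi:ℂ)*I*u/ω2)) (exp (2*(Real.pi:ℂ)*I*ω1/ω2)) /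
  qPoch (exp (2*(Real.pi:ℂ)*I*u/ω1) * exp (-(2*(Real.pi:ℂ)*I*ω2)/ω1))
    (exp (-(2*(Real.pi:ℂ)*I*ω2)/ω1))

/-- The evaluation `𝒩(g₀,…,g₄)` of the hyperbolic Nassrallah–Rahman integral, with
`ℬ = (2N-2)g + Σ_n g_n`. -/
noncomputable def NRval (N : ℕ) (ω1 ω2 g : ℂ) (gv : Fin 5 → ℂ) : ℂ :=
  (-2)^N * (N.factorial : ℂ) *
    qPoch (exp (-(2*(Real.pi:ℂ)*I*ω2)/ω1)) (exp (-(2*(Real.pi:ℂ)*I*ω2)/ω1)) ^ N /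
    qPoch (exp (2*(Real.pi:ℂ)*I*ω1/ω2)) (exp (2*(Real.pi:ℂ)*I*ω1/ω2)) ^ N *
  ∏ j ∈ Finset.range N,
    (dsine ω1 ω2 g / dsine ω1 ω2 (((j:ℂ) + 1) * g)) *
    ((∏ n : Fin 5, dsine ω1 ω2 (-(j:ℂ)*g + ((2*(N:ℂ) - 2)*g + ∑ k, gv k) - gv n)) /
     ∏ n : Fin 5, ∏ m : Fin 5, if n < m then dsine ω1 ω2 ((j:ℂ)*g + gv n + gv m) else 1)

/-- All double sine values involved in `𝒩` are (defined and) nonzero. -/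
def NRvalDef (N : ℕ) (ω1 ω2 g : ℂ) (gv : Fin 5 → ℂ) : Prop :=
  dsine ω1 ω2 g ≠ 0 ∧
  ∀ j ∈ Finset.range N,
    dsine ω1 ω2 (((j:ℂ) + 1) * g) ≠ 0 ∧
    (∀ n : Fin 5, dsine ω1 ω2 (-(j:ℂ)*g + ((2*(N:ℂ) - 2)*g + ∑ k, gv k) - gv n) ≠ 0) ∧
    (∀ n m : Fin 5, n < m → dsine ω1 ω2 ((j:ℂ)*g + gv n + gv m) ≠ 0)

section helpers
open Filter

lemma summable_log_aux (a p : ℂ) (hp : ‖p‖ < 1) :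
    Summable fun n : ℕ => Complex.log (1 - a * p ^ n) := by
  have hg : Summable fun n : ℕ => ‖a‖ * ‖p‖ ^ n :=
    (summable_geometric_of_lt_one (norm_nonneg p) hp).mul_left _
  refine Summable.of_norm_bounded_eventually (g := fun n => (3/2) * (‖a‖ * ‖p‖ ^ n))
    (hg.mul_left _) ?_
  have ht : Filter.Tendsto (fun n : ℕ => ‖a‖ * ‖p‖ ^ n) atTop (nhds 0) := by
    simpa using (tendsto_pow_atTop_nhds_zero_of_lt_one (by positivity)
      (by exact hp) : Tendsto (fun n : ℕ => ‖p‖ ^ n) atTop (nhds 0)).const_mul ‖a‖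
  rw [Nat.cofinite_eq_atTop]
  filter_upwards [ht.eventually_le_const (by norm_num : (0:ℝ) < 1/2)] with n hn
  have hle : ‖-(a * p ^ n)‖ ≤ 1/2 := by
    rw [norm_neg, norm_mul, norm_pow]; exact hn
  calc ‖Complex.log (1 - a * p ^ n)‖ = ‖Complex.log (1 + -(a * p ^ n))‖ := by ring_nf
    _ ≤ (3/2) * ‖-(a * p ^ n)‖ := Complex.norm_log_one_add_half_le_self hle
    _ = (3/2) * (‖a‖ * ‖p‖ ^ n) := by rw [norm_neg, norm_mul, norm_pow]

lemma qPoch_ne_zero (a p : ℂ) (hp : ‖p‖ < 1) (h : ∀ n : ℕ, 1 - a * p ^ n ≠ 0) :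
    qPoch a p ≠ 0 := by
  have := Complex.cexp_tsum_eq_tprod (f := fun n => 1 - a * p ^ n)
    (fun n => h n) (summable_log_aux a p hp)
  rw [qPoch, ← this]
  exact Complex.exp_ne_zero _

lemma multipliable_aux (a p : ℂ) (hp : ‖p‖ < 1) :
    Multipliable fun n : ℕ => 1 - a * p ^ n := by
  by_cases h : ∀ n : ℕ, 1 - a * p ^ n ≠ 0
  · exact Complex.multipliable_of_summable_log (summable_log_aux a p hp)
  · push_neg at h
    obtain ⟨k, hk⟩ := h
    refine ⟨0, ?_⟩
    rw [HasProd]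
    apply Tendsto.congr' _ tendsto_const_nhds
    filter_upwards [Filter.eventually_ge_atTop {k}] with s hs
    exact (Finset.prod_eq_zero (hs (Finset.mem_singleton_self k)) hk).symm

lemma qPoch_shift (a p : ℂ) (hp : ‖p‖ < 1) : qPoch a p = (1 - a) * qPoch (a * p) p := by
  have hm : Multipliable (fun n : ℕ => 1 - a * p ^ (n+1)) :=
    (multipliable_aux (a*p) p hp).congr (fun n => by ring)
  have h := tprod_eq_zero_mul' (f := fun n : ℕ => 1 - a * p ^ n) hm
  simp only [pow_zero, mul_one] at h
  rw [qPoch, h, qPoch]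
  congr 1
  exact tprod_congr fun n => by ring

lemma norm_exp_lt_one {z : ℂ} (h : z.re < 0) : ‖exp z‖ < 1 := by
  rw [Complex.norm_exp]
  exact Real.exp_lt_one_iff.mpr h

lemma norm_q_lt (ω1 ω2 : ℂ) (h : 0 < (ω1/ω2).im) :
    ‖exp (2*(Real.pi:ℂ)*I*ω1/ω2)‖ < 1 := by
  apply norm_exp_lt_one
  have hz : 2*(Real.pi:ℂ)*I*ω1/ω2 = (((2*Real.pi : ℝ)):ℂ)*(ω1/ω2)*I := by
    push_cast; ring
  rw [hz]
  simp only [Complex.mul_I_re, Complex.im_ofReal_mul]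
  have := Real.pi_pos
  nlinarith

lemma norm_qt_lt (ω1 ω2 : ℂ) (h : 0 < (ω1/ω2).im) :
    ‖exp (-(2*(Real.pi:ℂ)*I*ω2)/ω1)‖ < 1 := by
  apply norm_exp_lt_one
  have hz : -(2*(Real.pi:ℂ)*I*ω2)/ω1 = (((2*Real.pi : ℝ)):ℂ)*(-(ω2/ω1))*I := by
    push_cast; ring
  rw [hz]
  have him : (ω2/ω1).im < 0 := by
    have h1 : ω2/ω1 = (ω1/ω2)⁻¹ := (inv_div ω1 ω2).symm
    rw [h1, Complex.inv_im]
    have hns : 0 < Complex.normSq (ω1/ω2) := by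
      apply Complex.normSq_pos.mpr
      intro hc; rw [hc] at h; simp at h
    exact div_neg_of_neg_of_pos (by linarith) hns
  simp only [Complex.mul_I_re, Complex.im_ofReal_mul, Complex.neg_im]
  have := Real.pi_pos
  nlinarith

lemma dsine_shift (ω1 ω2 u : ℂ) (hω1 : ω1 ≠ 0)
    (hq : ‖exp (2*(Real.pi:ℂ)*I*ω1/ω2)‖ < 1) :
    dsine ω1 ω2 u = (1 - exp (2*(Real.pi:ℂ)*I*u/ω2)) * dsine ω1 ω2 (u + ω1) := by
  rw [dsine, dsine]
  have h1 : exp (2*(Real.pi:ℂ)*I*(u+ω1)/ω2)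
      = exp (2*(Real.pi:ℂ)*I*u/ω2) * exp (2*(Real.pi:ℂ)*I*ω1/ω2) := by
    rw [← Complex.exp_add]; congr 1; ring
  have h2 : exp (2*(Real.pi:ℂ)*I*(u+ω1)/ω1) = exp (2*(Real.pi:ℂ)*I*u/ω1) := by
    have harg : 2*(Real.pi:ℂ)*I*(u+ω1)/ω1 = 2*(Real.pi:ℂ)*I*u/ω1 + 2*(Real.pi:ℂ)*I := by
      field_simp
    rw [harg, Complex.exp_add, Complex.exp_two_pi_mul_I, mul_one]
  rw [h1, h2, qPoch_shift _ _ hq, mul_div_assoc]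

lemma dsine_shift' (ω1 ω2 u : ℂ) (hω1 : ω1 ≠ 0)
    (hq : ‖exp (2*(Real.pi:ℂ)*I*ω1/ω2)‖ < 1) :
    dsine ω1 ω2 (u - ω1) = (1 - exp (2*(Real.pi:ℂ)*I*(u - ω1)/ω2)) * dsine ω1 ω2 u := by
  have h := dsine_shift ω1 ω2 (u - ω1) hω1 hq
  rwa [sub_add_cancel] at h

lemma one_sub_self_pow_ne (p : ℂ) (hp : ‖p‖ < 1) (n : ℕ) : 1 - p * p ^ n ≠ 0 := by
  intro h
  have h1 : (1:ℂ) = p * p ^ n := sub_eq_zero.mp h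
  have h2 : ‖p * p ^ n‖ < 1 := by
    rw [norm_mul, norm_pow]
    calc ‖p‖ * ‖p‖ ^ n = ‖p‖ ^ (n+1) := by ring
      _ < 1 := pow_lt_one₀ (norm_nonneg p) hp (Nat.succ_ne_zero n)
  rw [← h1] at h2
  simp at h2

lemma pairProd (f : Fin 5 → Fin 5 → ℂ) :
    (∏ n : Fin 5, ∏ m : Fin 5, if n < m then f n m else 1)
    = f 0 1 * f 0 2 * f 0 3 * f 0 4 * f 1 2 * f 1 3 * f 1 4 * f 2 3 * f 2 4 * f 3 4 := by
  simp (config := { decide := true }) only [Fin.prod_univ_five, if_true, if_false]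
  ring

end helpers

section perj


lemma corelem (T A0 A1 A2 A3p A4p D01 D02 D03 D04 D12 D13 D14 D23 D24 D34 x3 x4 y01 y02 y12 z : ℂ)
    (hT : T ≠ 0) (hA0 : A0 ≠ 0) (hA1 : A1 ≠ 0) (hA2 : A2 ≠ 0) (hA3 : A3p ≠ 0) (hA4 : A4p ≠ 0)
    (hD01 : D01 ≠ 0) (hD02 : D02 ≠ 0) (hD03 : D03 ≠ 0) (hD04 : D04 ≠ 0) (hD12 : D12 ≠ 0)
    (hD13 : D13 ≠ 0) (hD14 : D14 ≠ 0) (hD23 : D23 ≠ 0) (hD24 : D24 ≠ 0) (hD34 : D34 ≠ 0)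
    (hy01 : 1 - y01 ≠ 0) (hy02 : 1 - y02 ≠ 0) (hy12 : 1 - y12 ≠ 0) (hz : 1 - z ≠ 0) :
    (T * ((A0 * A1 * A2 * ((1 - x3) * A3p) * ((1 - x4) * A4p)) /
      ((1 - y01) * D01 * ((1 - y02) * D02) * D03 * D04 * ((1 - y12) * D12 * D13 * D14) *
        (D23 * D24) * D34))) /
    (T * ((A0 * A1 * A2 * A3p * A4p) /
      (D01 * D02 * D03 * D04 * (D12 * D13 * D14) * (D23 * D24) * ((1 - z) * D34)))) =
    ((1 - z) * (1 - x3) * (1 - x4)) / ((1 - y01) * (1 - y02) * (1 - y12)) := by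
  rw [mul_div_mul_left _ _ hT, div_div_div_comm]
  have hX : (A0 * A1 * A2 * ((1 - x3) * A3p) * ((1 - x4) * A4p)) / (A0 * A1 * A2 * A3p * A4p)
      = (1 - x3) * (1 - x4) := by
    rw [div_eq_iff (mul_ne_zero (mul_ne_zero (mul_ne_zero (mul_ne_zero hA0 hA1) hA2) hA3) hA4)]
    ring
  have hY : ((1 - y01) * D01 * ((1 - y02) * D02) * D03 * D04 * ((1 - y12) * D12 * D13 * D14) *
        (D23 * D24) * D34) /
      (D01 * D02 * D03 * D04 * (D12 * D13 * D14) * (D23 * D24) * ((1 - z) * D34))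
      = ((1 - y01) * (1 - y02) * (1 - y12)) / (1 - z) := by
    rw [div_eq_div_iff (mul_ne_zero (mul_ne_zero (mul_ne_zero (mul_ne_zero (mul_ne_zero
      (mul_ne_zero hD01 hD02) hD03) hD04) (mul_ne_zero (mul_ne_zero hD12 hD13) hD14))
      (mul_ne_zero hD23 hD24)) (mul_ne_zero hz hD34)) hz]
    ring
  rw [hX, hY, div_div_eq_mul_div]
  ring

set_option maxHeartbeats 0 in
lemma perjlem (N j : ℕ) (ω1 ω2 g : ℂ) (gv gv' : Fin 5 → ℂ)
    (h0 : gv' 0 = gv 0 + ω1/2) (h1 : gv' 1 = gv 1 + ω1/2) (h2 : gv' 2 = gv 2 + ω1/2)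
    (h3 : gv' 3 = gv 3 - ω1/2) (h4 : gv' 4 = gv 4 - ω1/2)
    (hω1 : ω1 ≠ 0)
    (hq : ‖exp (2*(Real.pi:ℂ)*I*ω1/ω2)‖ < 1)
    (hg : dsine ω1 ω2 g ≠ 0)
    (hT1 : dsine ω1 ω2 (((j:ℂ) + 1) * g) ≠ 0)
    (hA : ∀ n : Fin 5, dsine ω1 ω2 (-(j:ℂ)*g + ((2*(N:ℂ) - 2)*g + ∑ k, gv k) - gv n) ≠ 0)
    (hD : ∀ n m : Fin 5, n < m → dsine ω1 ω2 ((j:ℂ)*g + gv n + gv m) ≠ 0)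
    (hD34' : dsine ω1 ω2 ((j:ℂ)*g + gv' 3 + gv' 4) ≠ 0) :
    ((dsine ω1 ω2 g / dsine ω1 ω2 (((j:ℂ) + 1) * g)) *
      ((∏ n : Fin 5, dsine ω1 ω2 (-(j:ℂ)*g + ((2*(N:ℂ) - 2)*g + ∑ k, gv k) - gv n)) /
       ∏ n : Fin 5, ∏ m : Fin 5, if n < m then dsine ω1 ω2 ((j:ℂ)*g + gv n + gv m) else 1)) /
    ((dsine ω1 ω2 g / dsine ω1 ω2 (((j:ℂ) + 1) * g)) *
      ((∏ n : Fin 5, dsine ω1 ω2 (-(j:ℂ)*g + ((2*(N:ℂ) - 2)*g + ∑ k, gv' k) - gv' n)) /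
       ∏ n : Fin 5, ∏ m : Fin 5, if n < m then dsine ω1 ω2 ((j:ℂ)*g + gv' n + gv' m) else 1))
    = ((1 - exp (2*(Real.pi:ℂ)*I*g/ω2) ^ j * exp (2*(Real.pi:ℂ)*I*(gv 3)/ω2) *
              exp (2*(Real.pi:ℂ)*I*(gv 4)/ω2) / exp (2*(Real.pi:ℂ)*I*ω1/ω2)) *
          (1 - exp (2*(Real.pi:ℂ)*I*g/ω2) ^ (-(j:ℤ)) *
              exp (2*(Real.pi:ℂ)*I*((2*(N:ℂ) - 2)*g + ∑ k, gv k)/ω2) /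
              exp (2*(Real.pi:ℂ)*I*(gv 3)/ω2)) *
          (1 - exp (2*(Real.pi:ℂ)*I*g/ω2) ^ (-(j:ℤ)) *
              exp (2*(Real.pi:ℂ)*I*((2*(N:ℂ) - 2)*g + ∑ k, gv k)/ω2) /
              exp (2*(Real.pi:ℂ)*I*(gv 4)/ω2))) /
        ((1 - exp (2*(Real.pi:ℂ)*I*g/ω2) ^ j * exp (2*(Real.pi:ℂ)*I*(gv 0)/ω2) *
              exp (2*(Real.pi:ℂ)*I*(gv 1)/ω2)) *
          (1 - exp (2*(Real.pi:ℂ)*I*g/ω2) ^ j * exp (2*(Real.pi:ℂ)*I*(gv 0)/ω2) *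
              exp (2*(Real.pi:ℂ)*I*(gv 2)/ω2)) *
          (1 - exp (2*(Real.pi:ℂ)*I*g/ω2) ^ j * exp (2*(Real.pi:ℂ)*I*(gv 1)/ω2) *
              exp (2*(Real.pi:ℂ)*I*(gv 2)/ω2))) := by
  have hs' : (∑ k, gv' k) = (∑ k, gv k) + ω1/2 := by
    rw [Fin.sum_univ_five, Fin.sum_univ_five, h0, h1, h2, h3, h4]; ring
  -- argument normalizations for the shifted parameters
  have e0 : -(j:ℂ)*g + ((2*(N:ℂ) - 2)*g + ∑ k, gv' k) - gv' 0
      = -(j:ℂ)*g + ((2*(N:ℂ) - 2)*g + ∑ k, gv k) - gv 0 := by rw [hs', h0]; ring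
  have e1 : -(j:ℂ)*g + ((2*(N:ℂ) - 2)*g + ∑ k, gv' k) - gv' 1
      = -(j:ℂ)*g + ((2*(N:ℂ) - 2)*g + ∑ k, gv k) - gv 1 := by rw [hs', h1]; ring
  have e2 : -(j:ℂ)*g + ((2*(N:ℂ) - 2)*g + ∑ k, gv' k) - gv' 2
      = -(j:ℂ)*g + ((2*(N:ℂ) - 2)*g + ∑ k, gv k) - gv 2 := by rw [hs', h2]; ring
  have e3 : -(j:ℂ)*g + ((2*(N:ℂ) - 2)*g + ∑ k, gv' k) - gv' 3
      = (-(j:ℂ)*g + ((2*(N:ℂ) - 2)*g + ∑ k, gv k) - gv 3) + ω1 := by rw [hs', h3]; ring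
  have e4 : -(j:ℂ)*g + ((2*(N:ℂ) - 2)*g + ∑ k, gv' k) - gv' 4
      = (-(j:ℂ)*g + ((2*(N:ℂ) - 2)*g + ∑ k, gv k) - gv 4) + ω1 := by rw [hs', h4]; ring
  have p01 : (j:ℂ)*g + gv' 0 + gv' 1 = ((j:ℂ)*g + gv 0 + gv 1) + ω1 := by rw [h0, h1]; ring
  have p02 : (j:ℂ)*g + gv' 0 + gv' 2 = ((j:ℂ)*g + gv 0 + gv 2) + ω1 := by rw [h0, h2]; ring
  have p12 : (j:ℂ)*g + gv' 1 + gv' 2 = ((j:ℂ)*g + gv 1 + gv 2) + ω1 := by rw [h1, h2]; ring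
  have p03 : (j:ℂ)*g + gv' 0 + gv' 3 = (j:ℂ)*g + gv 0 + gv 3 := by rw [h0, h3]; ring
  have p04 : (j:ℂ)*g + gv' 0 + gv' 4 = (j:ℂ)*g + gv 0 + gv 4 := by rw [h0, h4]; ring
  have p13 : (j:ℂ)*g + gv' 1 + gv' 3 = (j:ℂ)*g + gv 1 + gv 3 := by rw [h1, h3]; ring
  have p14 : (j:ℂ)*g + gv' 1 + gv' 4 = (j:ℂ)*g + gv 1 + gv 4 := by rw [h1, h4]; ring
  have p23 : (j:ℂ)*g + gv' 2 + gv' 3 = (j:ℂ)*g + gv 2 + gv 3 := by rw [h2, h3]; ring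
  have p24 : (j:ℂ)*g + gv' 2 + gv' 4 = (j:ℂ)*g + gv 2 + gv 4 := by rw [h2, h4]; ring
  have p34 : (j:ℂ)*g + gv' 3 + gv' 4 = ((j:ℂ)*g + gv 3 + gv 4) - ω1 := by rw [h3, h4]; ring
  simp (config := { decide := true }) only [Fin.prod_univ_five, if_true, if_false, one_mul, mul_one]
  rw [e0, e1, e2, e3, e4, p01, p02, p03, p04, p12, p13, p14, p23, p24, p34]
  -- nonzero facts
  have hA0 := hA 0
  have hA1 := hA 1
  have hA2 := hA 2
  have hA3 := hA 3
  have hA4 := hA 4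
  rw [dsine_shift ω1 ω2 (-(j:ℂ)*g + ((2*(N:ℂ) - 2)*g + ∑ k, gv k) - gv 3) hω1 hq] at hA3
  rw [dsine_shift ω1 ω2 (-(j:ℂ)*g + ((2*(N:ℂ) - 2)*g + ∑ k, gv k) - gv 4) hω1 hq] at hA4
  have hx3 := left_ne_zero_of_mul hA3
  have hA3p := right_ne_zero_of_mul hA3
  have hx4 := left_ne_zero_of_mul hA4
  have hA4p := right_ne_zero_of_mul hA4
  have hb01 := hD 0 1 (by decide)
  have hb02 := hD 0 2 (by decide)
  have hb12 := hD 1 2 (by decide)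
  rw [dsine_shift ω1 ω2 ((j:ℂ)*g + gv 0 + gv 1) hω1 hq] at hb01
  rw [dsine_shift ω1 ω2 ((j:ℂ)*g + gv 0 + gv 2) hω1 hq] at hb02
  rw [dsine_shift ω1 ω2 ((j:ℂ)*g + gv 1 + gv 2) hω1 hq] at hb12
  have hy01 := left_ne_zero_of_mul hb01
  have hD01p := right_ne_zero_of_mul hb01
  have hy02 := left_ne_zero_of_mul hb02
  have hD02p := right_ne_zero_of_mul hb02
  have hy12 := left_ne_zero_of_mul hb12
  have hD12p := right_ne_zero_of_mul hb12
  have hD03 := hD 0 3 (by decide)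
  have hD04 := hD 0 4 (by decide)
  have hD13 := hD 1 3 (by decide)
  have hD14 := hD 1 4 (by decide)
  have hD23 := hD 2 3 (by decide)
  have hD24 := hD 2 4 (by decide)
  have hD34 := hD 3 4 (by decide)
  -- expand the shifted dsine values in the goal
  rw [dsine_shift ω1 ω2 (-(j:ℂ)*g + ((2*(N:ℂ) - 2)*g + ∑ k, gv k) - gv 3) hω1 hq,
      dsine_shift ω1 ω2 (-(j:ℂ)*g + ((2*(N:ℂ) - 2)*g + ∑ k, gv k) - gv 4) hω1 hq,
      dsine_shift ω1 ω2 ((j:ℂ)*g + gv 0 + gv 1) hω1 hq,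
      dsine_shift ω1 ω2 ((j:ℂ)*g + gv 0 + gv 2) hω1 hq,
      dsine_shift ω1 ω2 ((j:ℂ)*g + gv 1 + gv 2) hω1 hq,
      dsine_shift' ω1 ω2 ((j:ℂ)*g + gv 3 + gv 4) hω1 hq]
  -- rewrite the exponentials into the product form
  have x3 : exp (2*(Real.pi:ℂ)*I*(-(j:ℂ)*g + ((2*(N:ℂ) - 2)*g + ∑ k, gv k) - gv 3)/ω2)
      = exp (2*(Real.pi:ℂ)*I*g/ω2) ^ (-(j:ℤ)) *
        exp (2*(Real.pi:ℂ)*I*((2*(N:ℂ) - 2)*g + ∑ k, gv k)/ω2) /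
        exp (2*(Real.pi:ℂ)*I*(gv 3)/ω2) := by
    rw [div_eq_mul_inv _ (exp (2*(Real.pi:ℂ)*I*(gv 3)/ω2)), ← Complex.exp_neg,
      ← Complex.exp_int_mul, ← Complex.exp_add, ← Complex.exp_add]
    congr 1; push_cast; ring
  have x4 : exp (2*(Real.pi:ℂ)*I*(-(j:ℂ)*g + ((2*(N:ℂ) - 2)*g + ∑ k, gv k) - gv 4)/ω2)
      = exp (2*(Real.pi:ℂ)*I*g/ω2) ^ (-(j:ℤ)) *
        exp (2*(Real.pi:ℂ)*I*((2*(N:ℂ) - 2)*g + ∑ k, gv k)/ω2) /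
        exp (2*(Real.pi:ℂ)*I*(gv 4)/ω2) := by
    rw [div_eq_mul_inv _ (exp (2*(Real.pi:ℂ)*I*(gv 4)/ω2)), ← Complex.exp_neg,
      ← Complex.exp_int_mul, ← Complex.exp_add, ← Complex.exp_add]
    congr 1; push_cast; ring
  have y01 : exp (2*(Real.pi:ℂ)*I*((j:ℂ)*g + gv 0 + gv 1)/ω2)
      = exp (2*(Real.pi:ℂ)*I*g/ω2) ^ j * exp (2*(Real.pi:ℂ)*I*(gv 0)/ω2) *
        exp (2*(Real.pi:ℂ)*I*(gv 1)/ω2) := by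
    rw [← Complex.exp_nat_mul, ← Complex.exp_add, ← Complex.exp_add]
    congr 1; ring
  have y02 : exp (2*(Real.pi:ℂ)*I*((j:ℂ)*g + gv 0 + gv 2)/ω2)
      = exp (2*(Real.pi:ℂ)*I*g/ω2) ^ j * exp (2*(Real.pi:ℂ)*I*(gv 0)/ω2) *
        exp (2*(Real.pi:ℂ)*I*(gv 2)/ω2) := by
    rw [← Complex.exp_nat_mul, ← Complex.exp_add, ← Complex.exp_add]
    congr 1; ring
  have y12 : exp (2*(Real.pi:ℂ)*I*((j:ℂ)*g + gv 1 + gv 2)/ω2)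
      = exp (2*(Real.pi:ℂ)*I*g/ω2) ^ j * exp (2*(Real.pi:ℂ)*I*(gv 1)/ω2) *
        exp (2*(Real.pi:ℂ)*I*(gv 2)/ω2) := by
    rw [← Complex.exp_nat_mul, ← Complex.exp_add, ← Complex.exp_add]
    congr 1; ring
  have z34 : exp (2*(Real.pi:ℂ)*I*((j:ℂ)*g + gv 3 + gv 4 - ω1)/ω2)
      = exp (2*(Real.pi:ℂ)*I*g/ω2) ^ j * exp (2*(Real.pi:ℂ)*I*(gv 3)/ω2) *
        exp (2*(Real.pi:ℂ)*I*(gv 4)/ω2) / exp (2*(Real.pi:ℂ)*I*ω1/ω2) := by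
    rw [div_eq_mul_inv _ (exp (2*(Real.pi:ℂ)*I*ω1/ω2)), ← Complex.exp_neg,
      ← Complex.exp_nat_mul, ← Complex.exp_add, ← Complex.exp_add, ← Complex.exp_add]
    congr 1; ring
  rw [p34] at hD34'
  rw [dsine_shift' ω1 ω2 ((j:ℂ)*g + gv 3 + gv 4) hω1 hq] at hD34'
  have h1z := left_ne_zero_of_mul hD34'
  rw [x3, x4, y01, y02, y12, z34]
  rw [x3] at hx3
  rw [x4] at hx4
  rw [y01] at hy01
  rw [y02] at hy02
  rw [y12] at hy12
  rw [z34] at h1z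
  have hT : dsine ω1 ω2 g / dsine ω1 ω2 (((j:ℂ) + 1) * g) ≠ 0 := div_ne_zero hg hT1
  exact corelem _ _ _ _ _ _ _ _ _ _ _ _ _ _ _ _ _ _ _ _ _ _
    hT hA0 hA1 hA2 hA3p hA4p hD01p hD02p hD03 hD04 hD12p hD13 hD14 hD23 hD24 hD34
    hy01 hy02 hy12 h1z


/-- Behaviour of the integral evaluation `𝒩` under the parameter shift
`g₀,g₁,g₂ → g₀+ω1/2, g₁+ω1/2, g₂+ω1/2`, `g₃,g₄ → g₃−ω1/2, g₄−ω1/2`: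
`𝒩(g)/𝒩(g shifted) = ρ̃/ρ`. -/
theorem stmt15 (N : ℕ) (hN : 1 ≤ N)
    (ω1 ω2 : ℂ) (hω1 : ω1 ≠ 0) (hω2 : ω2 ≠ 0)
    (h12 : 0 < (ω1/ω2).im) (h12' : 0 < (ω1/ω2).re)
    (g : ℂ) (gv : Fin 5 → ℂ)
    (hdef : NRvalDef N ω1 ω2 g gv)
    (hdef' : NRvalDef N ω1 ω2 g
      (fun n => gv n + (if (n:ℕ) < 3 then (1:ℂ) else -1) * ω1 / 2)) :
    NRval N ω1 ω2 g gv /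
        NRval N ω1 ω2 g (fun n => gv n + (if (n:ℕ) < 3 then (1:ℂ) else -1) * ω1 / 2)
      = (∏ j ∈ Finset.range N,
          (1 - exp (2*(Real.pi:ℂ)*I*g/ω2) ^ j * exp (2*(Real.pi:ℂ)*I*(gv 3)/ω2) *
              exp (2*(Real.pi:ℂ)*I*(gv 4)/ω2) / exp (2*(Real.pi:ℂ)*I*ω1/ω2)) *
          (1 - exp (2*(Real.pi:ℂ)*I*g/ω2) ^ (-(j:ℤ)) *
              exp (2*(Real.pi:ℂ)*I*((2*(N:ℂ) - 2)*g + ∑ k, gv k)/ω2) /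
              exp (2*(Real.pi:ℂ)*I*(gv 3)/ω2)) *
          (1 - exp (2*(Real.pi:ℂ)*I*g/ω2) ^ (-(j:ℤ)) *
              exp (2*(Real.pi:ℂ)*I*((2*(N:ℂ) - 2)*g + ∑ k, gv k)/ω2) /
              exp (2*(Real.pi:ℂ)*I*(gv 4)/ω2))) /
        ∏ j ∈ Finset.range N,
          (1 - exp (2*(Real.pi:ℂ)*I*g/ω2) ^ j * exp (2*(Real.pi:ℂ)*I*(gv 0)/ω2) *
              exp (2*(Real.pi:ℂ)*I*(gv 1)/ω2)) *
          (1 - exp (2*(Real.pi:ℂ)*I*g/ω2) ^ j * exp (2*(Real.pi:ℂ)*I*(gv 0)/ω2) *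
              exp (2*(Real.pi:ℂ)*I*(gv 2)/ω2)) *
          (1 - exp (2*(Real.pi:ℂ)*I*g/ω2) ^ j * exp (2*(Real.pi:ℂ)*I*(gv 1)/ω2) *
              exp (2*(Real.pi:ℂ)*I*(gv 2)/ω2)) := by
  have hq := norm_q_lt ω1 ω2 h12
  have hqt := norm_qt_lt ω1 ω2 h12
  have hC : (-2:ℂ)^N * (N.factorial : ℂ) *
      qPoch (exp (-(2*(Real.pi:ℂ)*I*ω2)/ω1)) (exp (-(2*(Real.pi:ℂ)*I*ω2)/ω1)) ^ N /
      qPoch (exp (2*(Real.pi:ℂ)*I*ω1/ω2)) (exp (2*(Real.pi:ℂ)*I*ω1/ω2)) ^ N ≠ 0 := by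
    apply div_ne_zero
    · exact mul_ne_zero (mul_ne_zero (pow_ne_zero _ (by norm_num))
        (Nat.cast_ne_zero.mpr N.factorial_ne_zero))
        (pow_ne_zero _ (qPoch_ne_zero _ _ hqt (one_sub_self_pow_ne _ hqt)))
    · exact pow_ne_zero _ (qPoch_ne_zero _ _ hq (one_sub_self_pow_ne _ hq))
  rw [NRval, NRval, mul_div_mul_left _ _ hC, ← Finset.prod_div_distrib,
    ← Finset.prod_div_distrib]
  refine Finset.prod_congr rfl fun j hj => ?_
  obtain ⟨hg, hrest⟩ := hdef
  obtain ⟨hT1, hAj, hDj⟩ := hrest j hj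
  obtain ⟨-, hrest'⟩ := hdef'
  exact perjlem N j ω1 ω2 g gv _
    (by simp (config := { decide := true }) only [if_false, if_true]; ring)
    (by simp (config := { decide := true }) only [if_false, if_true]; ring)
    (by simp (config := { decide := true }) only [if_false, if_true]; ring)
    (by simp (config := { decide := true }) only [if_false, if_true]; ring)
    (by simp (config := { decide := true }) only [if_false, if_true]; ring)
    hω1 hq hg hT1 hAj hDj (((hrest' j hj).2.2) 3 4 (by decide))
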